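/- For every k ∈ ℕ, the prefix-counting definitions and the recursive definitions of the witness languages agree: W_k = W′_k, W_k⁺ = W′_k⁺ and W_k⁻ = W′_k⁻. -/

import Mathlib

namespace ADTpaper

/-- The two-letter alphabet is `Bool`, with `a := true` and `b := false`;
`la` is the one-word language `{a}`. -/
def la : Language Bool := {[true]}

/-- The one-word language `{b}`. -/
def lb : Language Bool := {[false]}

/-- `μ(w)`: the number of occurrences of `a` minus the number of occurrences of `b`. -/
def mu (w : List Bool) : ℤ := (w.count true : ℤ) - (w.count false : ℤ)

/-- The prefix-counting definition of the witness language `W_k`. -/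
def W (k : ℕ) : Language Bool :=
  {w | mu w = 0 ∧ (∀ w', w' <+: w → 0 ≤ mu w' ∧ mu w' ≤ (k : ℤ)) ∧
    ∃ w'', w'' <+: w ∧ mu w'' = (k : ℤ)}

/-- The prefix-counting definition of `W_k⁺`. -/
def Wp (k : ℕ) : Language Bool :=
  {w | mu w = (k : ℤ) ∧ ∀ w', w' <+: w → 0 ≤ mu w' ∧ mu w' ≤ (k : ℤ)}

/-- The prefix-counting definition of `W_k⁻`. -/
def Wm (k : ℕ) : Language Bool :=
  {w | mu w = -(k : ℤ) ∧ ∀ w', w' <+: w → -(k : ℤ) ≤ mu w' ∧ mu w' ≤ 0}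

/-- The letter swap `a ↔ b` applied to every word of a language. -/
def swapL (L : Language Bool) : Language Bool := (fun w => w.map not) '' (L : Set (List Bool))

-- basic mu lemmas
@[simp] lemma mu_nil : mu [] = 0 := by simp [mu]
@[simp] lemma mu_append (u v : List Bool) : mu (u ++ v) = mu u + mu v := by
  simp [mu, List.count_append]; ring
@[simp] lemma mu_true : mu [true] = 1 := by simp [mu]
@[simp] lemma mu_false : mu [false] = -1 := by simp [mu]
lemma mu_single (c : Bool) : mu [c] = if c then 1 else -1 := by cases c <;> simp
@[simp] lemma mu_cons (c : Bool) (w : List Bool) :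
    mu (c :: w) = (if c then 1 else -1) + mu w := by
  have : c :: w = [c] ++ w := rfl
  rw [this, mu_append, mu_single]

@[simp] lemma mu_map_not (w : List Bool) : mu (w.map not) = - mu w := by
  induction w with
  | nil => simp
  | cons c t ih => cases c <;> simp [ih] <;> ring

lemma mu_take_succ (w : List Bool) (n : ℕ) (h : n < w.length) :
    mu (w.take (n+1)) = mu (w.take n) + (if w[n] then 1 else -1) := by
  rw [List.take_succ, List.getElem?_eq_getElem h]
  have : (some w[n]).toList = [w[n]] := rfl
  rw [this, mu_append, mu_single]

lemma mu_take_step (w : List Bool) (n : ℕ) (h : n < w.length) :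
    mu (w.take (n+1)) - mu (w.take n) = 1 ∨ mu (w.take (n+1)) - mu (w.take n) = -1 := by
  rw [mu_take_succ w n h]
  cases w[n] <;> simp

lemma mu_drop (w : List Bool) (n : ℕ) : mu (w.drop n) = mu w - mu (w.take n) := by
  have h := mu_append (w.take n) (w.drop n)
  rw [List.take_append_drop] at h
  linarith

-- take-based characterizations
lemma mem_Wp (k : ℕ) (w : List Bool) :
    w ∈ Wp k ↔ mu w = (k:ℤ) ∧ ∀ n, 0 ≤ mu (w.take n) ∧ mu (w.take n) ≤ (k:ℤ) := by
  constructor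
  · rintro ⟨h1, h2⟩
    exact ⟨h1, fun n => h2 _ (List.take_prefix n w)⟩
  · rintro ⟨h1, h2⟩
    refine ⟨h1, fun w' hw' => ?_⟩
    obtain ⟨n, rfl⟩ : ∃ n, w' = w.take n :=
      ⟨w'.length, List.prefix_iff_eq_take.1 hw'⟩
    exact h2 n

lemma mem_Wm (k : ℕ) (w : List Bool) :
    w ∈ Wm k ↔ mu w = -(k:ℤ) ∧ ∀ n, -(k:ℤ) ≤ mu (w.take n) ∧ mu (w.take n) ≤ 0 := by
  constructor
  · rintro ⟨h1, h2⟩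
    exact ⟨h1, fun n => h2 _ (List.take_prefix n w)⟩
  · rintro ⟨h1, h2⟩
    refine ⟨h1, fun w' hw' => ?_⟩
    obtain ⟨n, rfl⟩ : ∃ n, w' = w.take n :=
      ⟨w'.length, List.prefix_iff_eq_take.1 hw'⟩
    exact h2 n

lemma mem_W (k : ℕ) (w : List Bool) :
    w ∈ W k ↔ mu w = 0 ∧ (∀ n, 0 ≤ mu (w.take n) ∧ mu (w.take n) ≤ (k:ℤ)) ∧
      ∃ n, n ≤ w.length ∧ mu (w.take n) = (k:ℤ) := by
  constructor
  · rintro ⟨h1, h2, w'', hpre, hmu⟩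
    refine ⟨h1, fun n => h2 _ (List.take_prefix n w), w''.length, hpre.length_le, ?_⟩
    rw [← List.prefix_iff_eq_take.1 hpre]; exact hmu
  · rintro ⟨h1, h2, n, hn, h3⟩
    refine ⟨h1, fun w' hw' => ?_, w.take n, List.take_prefix n w, h3⟩
    obtain ⟨m, rfl⟩ : ∃ m, w' = w.take m :=
      ⟨w'.length, List.prefix_iff_eq_take.1 hw'⟩
    exact h2 m

-- swap lemmas
lemma mem_swapL (L : Language Bool) (w : List Bool) : w ∈ swapL L ↔ w.map not ∈ L := by
  have key : ∀ v : List Bool, (v.map not).map not = v := by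
    intro v; induction v with
    | nil => rfl
    | cons c t ih => simp [ih]
  constructor
  · rintro ⟨v, hv, rfl⟩
    rw [List.map_map]
    show List.map (not ∘ not) v ∈ L
    rw [← List.map_map, key]; exact hv
  · intro h
    exact ⟨w.map not, h, key w⟩

lemma Wm_eq_swap (k : ℕ) : Wm k = swapL (Wp k) := by
  ext w
  rw [mem_swapL, mem_Wm, mem_Wp]
  constructor
  · rintro ⟨h1, h2⟩
    refine ⟨by simp [← List.map_take, h1], fun n => ?_⟩
    have := h2 n
    rw [← List.map_take, mu_map_not]
    constructor <;> linarith [this.1, this.2]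
  · rintro ⟨h1, h2⟩
    rw [mu_map_not] at h1
    refine ⟨by linarith, fun n => ?_⟩
    have := h2 n
    rw [← List.map_take, mu_map_not] at this
    constructor <;> linarith [this.1, this.2]

-- walk IVT
lemma walk_ivt (f : ℕ → ℤ) (a b : ℕ)
    (hstep : ∀ n, a ≤ n → n < b → f (n+1) - f n = 1 ∨ f (n+1) - f n = -1)
    (hab : a ≤ b) (c : ℤ) (h1 : f a ≤ c) (h2 : c ≤ f b) :
    ∃ t, a ≤ t ∧ t ≤ b ∧ f t = c := by
  induction b, hab using Nat.le_induction with
  | base => exact ⟨a, le_refl a, le_refl a, le_antisymm h1 h2⟩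
  | succ b hab ih =>
    by_cases hc : c ≤ f b
    · obtain ⟨t, ht1, ht2, ht3⟩ := ih (fun n hn hnb => hstep n hn (by omega)) hc
      exact ⟨t, ht1, by omega, ht3⟩
    · push_neg at hc
      have hs := hstep b hab (by omega)
      have : c = f (b+1) := by rcases hs with h | h <;> omega
      exact ⟨b+1, by omega, le_refl _, this.symm⟩

-- walk extremal rise lemma
lemma walk_rise (f : ℕ → ℤ) (N : ℕ)
    (hstep : ∀ n, n < N → f (n+1) - f n = 1 ∨ f (n+1) - f n = -1)
    (k : ℕ) (h0 : f 0 = 0) (hN : (k:ℤ) + 2 ≤ f N) :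
    ∃ a b, a + 1 < b ∧ b ≤ N ∧ f (a+1) = f a + 1 ∧ f (b-1) = f b - 1 ∧
      f b = f a + ((k:ℤ) + 2) ∧ ∀ t, a < t → t < b → f a + 1 ≤ f t ∧ f t ≤ f a + ((k:ℤ)+1) := by
  -- first hit of k+2
  have hex : ∃ t, t ≤ N ∧ f t = (k:ℤ) + 2 := by
    obtain ⟨t, ht1, ht2, ht3⟩ := walk_ivt f 0 N (fun n _ h => hstep n h) (Nat.zero_le N)
      ((k:ℤ)+2) (by omega) hN
    exact ⟨t, ht2, ht3⟩
  classical
  set q := Nat.find hex with hq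
  obtain ⟨hqN, hfq⟩ : q ≤ N ∧ f q = (k:ℤ) + 2 := Nat.find_spec hex
  have hlt : ∀ t, t < q → f t ≤ (k:ℤ) + 1 := by
    intro t ht
    by_contra hcon
    push_neg at hcon
    obtain ⟨s, hs1, hs2, hs3⟩ := walk_ivt f 0 t
      (fun n _ h => hstep n (by omega)) (Nat.zero_le t) ((k:ℤ)+2) (by omega) (by omega)
    have : q ≤ s := Nat.find_le (show s ≤ N ∧ f s = (k:ℤ)+2 from ⟨by omega, hs3⟩)
    omega
  -- last zero before q
  have h0q : f 0 = 0 ∧ 0 ≤ q := ⟨h0, Nat.zero_le q⟩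
  set p := Nat.findGreatest (fun t => f t = 0) q with hp
  have hfp : f p = 0 :=
    Nat.findGreatest_spec (P := fun t => f t = 0) (Nat.zero_le q) h0
  have hpq : p ≤ q := Nat.findGreatest_le q
  have hpos : ∀ t, p < t → t < q → 1 ≤ f t := by
    intro t ht1 ht2
    have hne : f t ≠ 0 := Nat.findGreatest_is_greatest ht1 (by omega)
    by_contra hcon
    push_neg at hcon
    obtain ⟨s, hs1, hs2, hs3⟩ := walk_ivt f t q (fun n hn h => hstep n (by omega))
      (by omega) 0 (by omega) (by omega)
    have hsq : s ≠ q := by intro h; rw [h, hfq] at hs3; omega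
    exact Nat.findGreatest_is_greatest (show p < s by omega) (by omega) hs3
  have hpq1 : p + 1 < q := by
    rcases Nat.lt_or_ge (p+1) q with h | h
    · exact h
    · have : p < q := by
        rcases Nat.lt_or_ge p q with h' | h'
        · exact h'
        · exfalso; have : p = q := le_antisymm hpq h'
          rw [this, hfq] at hfp; omega
      have hpeq : p + 1 = q := by omega
      have := hstep p (by omega)
      rw [hpeq, hfq, hfp] at this
      omega
  have hstep_p := hstep p (by omega)
  have hfp1 : f (p+1) = f p + 1 := by
    have h1 := hpos (p+1) (by omega) hpq1
    omega
  have hq1 : f (q-1) = f q - 1 := by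
    have hq1lt : p < q - 1 := by omega
    have h1 := hpos (q-1) hq1lt (by omega)
    have h2 := hlt (q-1) (by omega)
    have h3 := hstep (q-1) (by omega)
    have : q - 1 + 1 = q := by omega
    rw [this] at h3
    omega
  refine ⟨p, q, hpq1, hqN, by omega, by omega, by omega, fun t ht1 ht2 => ?_⟩
  have := hpos t ht1 ht2
  have := hlt t ht2
  omega

@[simp] lemma mem_la (w : List Bool) : w ∈ la ↔ w = [true] := Iff.rfl
@[simp] lemma mem_lb (w : List Bool) : w ∈ lb ↔ w = [false] := Iff.rfl
@[simp] lemma mem_topL (w : List Bool) : w ∈ (⊤ : Language Bool) := trivial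

lemma mem_five {A B C D E : Language Bool} {a b c d e : List Bool}
    (ha : a ∈ A) (hb : b ∈ B) (hc : c ∈ C) (hd : d ∈ D) (he : e ∈ E) :
    a ++ b ++ c ++ d ++ e ∈ A * B * C * D * E := by
  refine Language.mem_mul.2 ⟨a ++ b ++ c ++ d, ?_, e, he, rfl⟩
  refine Language.mem_mul.2 ⟨a ++ b ++ c, ?_, d, hd, rfl⟩
  refine Language.mem_mul.2 ⟨a ++ b, ?_, c, hc, rfl⟩
  exact Language.mem_mul.2 ⟨a, ha, b, hb, rfl⟩

lemma five_dest {A B C D E : Language Bool} {w : List Bool}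
    (h : w ∈ A * B * C * D * E) :
    ∃ a b c d e, a ∈ A ∧ b ∈ B ∧ c ∈ C ∧ d ∈ D ∧ e ∈ E ∧ w = a ++ b ++ c ++ d ++ e := by
  obtain ⟨x4, h4, e, he, rfl⟩ := Language.mem_mul.1 h
  obtain ⟨x3, h3, d, hd, rfl⟩ := Language.mem_mul.1 h4
  obtain ⟨x2, h2, c, hc, rfl⟩ := Language.mem_mul.1 h3
  obtain ⟨a, ha, b, hb, rfl⟩ := Language.mem_mul.1 h2
  exact ⟨a, b, c, d, e, ha, hb, hc, hd, he, rfl⟩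

lemma mem_TlaXlaT {X : Language Bool} {u x y : List Bool} (hx : x ∈ X) :
    u ++ true :: (x ++ true :: y) ∈ ⊤ * la * X * la * ⊤ := by
  have := mem_five (A := ⊤) (B := la) (C := X) (D := la) (E := ⊤)
    (a := u) (b := [true]) (c := x) (d := [true]) (e := y)
    trivial rfl hx rfl trivial
  simpa using this

-- The word-level rise lemma
lemma rise_mem (k : ℕ) (w : List Bool) (p q : ℕ) (hq : q ≤ w.length) (hpq : p ≤ q)
    (h : mu (w.take p) + ((k:ℤ)+2) ≤ mu (w.take q)) :
    w ∈ (⊤ * la * Wp k * la * ⊤ : Language Bool) := by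
  set z : List Bool := (w.take q).drop p with hz
  have hzlen : z.length = q - p := by
    simp [hz, List.length_drop, List.length_take]
    omega
  have hztake : ∀ n, z.take n = (w.take (min (p + n) q)).drop p := by
    intro n
    rw [hz, List.take_drop]
    congr 1
    rw [List.take_take]
  have hmuz : ∀ n, mu (z.take n) = mu (w.take (min (p+n) q)) - mu (w.take p) := by
    intro n
    rw [hztake n, mu_drop]
    have h1 : (w.take (min (p+n) q)).take p = w.take p := by
      rw [List.take_take]
      congr 1
      omega
    rw [h1]
  set f : ℕ → ℤ := fun n => mu (z.take n) with hf
  have hstep : ∀ n, n < z.length → f (n+1) - f n = 1 ∨ f (n+1) - f n = -1 :=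
    fun n hn => mu_take_step z n hn
  have hf0 : f 0 = 0 := by simp [hf]
  have hfN : (k:ℤ) + 2 ≤ f z.length := by
    have : z.take z.length = z := List.take_length
    rw [hf]
    simp only [this]
    rw [hz, mu_drop]
    have : (w.take q).take p = w.take p := by rw [List.take_take]; congr 1; omega
    rw [this]
    omega
  obtain ⟨a, b, hab, hbN, ha1, hb1, hfb, hmid⟩ := walk_rise f z.length hstep k hf0 hfN
  have hblen : b ≤ z.length := hbN
  have haz : a < z.length := by omega
  have hbz : b - 1 < z.length := by omega
  -- letters
  have hletter_a : z[a] = true := by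
    have := mu_take_succ z a haz
    rw [show mu (z.take (a+1)) = f (a+1) from rfl, show mu (z.take a) = f a from rfl] at this
    by_contra hcon
    rw [Bool.not_eq_true] at hcon
    rw [hcon] at this
    simp at this
    omega
  have hletter_b : z[b-1] = true := by
    have := mu_take_succ z (b-1) hbz
    have hb' : b - 1 + 1 = b := by omega
    rw [hb'] at this
    rw [show mu (z.take b) = f b from rfl, show mu (z.take (b-1)) = f (b-1) from rfl] at this
    by_contra hcon
    rw [Bool.not_eq_true] at hcon
    rw [hcon] at this
    simp at this
    omega
  -- middle word
  set x : List Bool := (z.take (b-1)).drop (a+1) with hx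
  have hxtake : ∀ m, x.take m = (z.take (min (a+1+m) (b-1))).drop (a+1) := by
    intro m
    rw [hx, List.take_drop]
    congr 1
    rw [List.take_take]
  have hmux : ∀ m, mu (x.take m) = f (min (a+1+m) (b-1)) - f (a+1) := by
    intro m
    rw [hxtake m, mu_drop]
    have h1 : (z.take (min (a+1+m) (b-1))).take (a+1) = z.take (a+1) := by
      rw [List.take_take]
      congr 1
      omega
    rw [h1]
  have hxWp : x ∈ Wp k := by
    rw [mem_Wp]
    constructor
    · have hxfull : x = x.take x.length := List.take_length.symm
      rw [hxfull, hmux]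
      have hxlen : x.length = b - 1 - (a+1) := by
        rw [hx]
        simp [List.length_drop, List.length_take]
        omega
      have : min (a+1+x.length) (b-1) = b - 1 := by omega
      rw [this]
      omega
    · intro m
      rw [hmux]
      set t := min (a+1+m) (b-1) with ht
      have h1 : a < t := by omega
      have h2 : t < b := by omega
      have := hmid t h1 h2
      omega
  -- decomposition
  have e1 : z.take (a+1) = z.take a ++ [true] := by
    rw [List.take_succ, List.getElem?_eq_getElem haz, hletter_a]
    rfl
  have e2 : z.take (b-1) = z.take (a+1) ++ x := by
    rw [hx]
    have h2 := List.take_append_drop (a+1) (z.take (b-1))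
    rw [List.take_take] at h2
    have hmin : min (a+1) (b-1) = a + 1 := by omega
    rw [hmin] at h2
    exact h2.symm
  have e3 : z.take b = z.take (b-1) ++ [true] := by
    have hb' : b = (b-1) + 1 := by omega
    conv_lhs => rw [hb']
    rw [List.take_succ, List.getElem?_eq_getElem hbz, hletter_b]
    rfl
  have ez : z.take a ++ true :: (x ++ true :: z.drop b) = z := by
    conv_rhs => rw [← List.take_append_drop b z, e3, e2, e1]
    simp
  have h1 : w.take p ++ z = w.take q := by
    have h2 := List.take_append_drop p (w.take q)
    rw [List.take_take] at h2
    have hmin : min p q = p := by omega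
    rw [hmin] at h2
    exact h2
  have goal_eq : (w.take p ++ z.take a) ++ true :: (x ++ true :: (z.drop b ++ w.drop q)) = w := by
    conv_rhs => rw [← List.take_append_drop q w, ← h1, ← ez]
    simp
  rw [← goal_eq]
  exact mem_TlaXlaT hxWp

lemma map_not_invol (v : List Bool) : (v.map not).map not = v := by
  induction v with
  | nil => rfl
  | cons c t ih => simp [ih]

lemma mem_Wm_map (k : ℕ) (c : List Bool) (hc : c ∈ Wp k) : c.map not ∈ Wm k := by
  rw [Wm_eq_swap, mem_swapL, map_not_invol]
  exact hc

lemma fall_mem (k : ℕ) (w : List Bool) (p q : ℕ) (hq : q ≤ w.length) (hpq : p ≤ q)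
    (h : mu (w.take q) + ((k:ℤ)+2) ≤ mu (w.take p)) :
    w ∈ (⊤ * lb * Wm k * lb * ⊤ : Language Bool) := by
  have hv : (w.map not) ∈ (⊤ * la * Wp k * la * ⊤ : Language Bool) := by
    apply rise_mem k (w.map not) p q (by simpa using hq) hpq
    rw [← List.map_take, ← List.map_take, mu_map_not, mu_map_not]
    omega
  obtain ⟨a, b, c, d, e, _, hb, hc, hd, _, hw⟩ := five_dest hv
  have hw' : w = a.map not ++ b.map not ++ c.map not ++ d.map not ++ e.map not := by
    have := congrArg (List.map not) hw
    rw [map_not_invol] at this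
    simpa using this
  rw [hw']
  rw [mem_la] at hb; rw [mem_la] at hd
  subst hb; subst hd
  exact mem_five trivial rfl (mem_Wm_map k c hc) rfl trivial

lemma mem_sup' {A B : Language Bool} {w : List Bool} : w ∈ A ⊔ B ↔ w ∈ A ∨ w ∈ B := Iff.rfl
lemma mem_diff' {A B : Language Bool} {w : List Bool} : w ∈ A \ B ↔ w ∈ A ∧ w ∉ B := Iff.rfl

/-- If all prefixes have `mu` in `[0, k+1]`, then `w` avoids the forbidden set. -/
lemma notF (k : ℕ) (w : List Bool)
    (hpre : ∀ w', w' <+: w → 0 ≤ mu w' ∧ mu w' ≤ (k:ℤ)+1) :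
    w ∉ (⊤ * la * Wp k * la * ⊤ ⊔ ⊤ * lb * Wm k * lb * ⊤ : Language Bool) := by
  rintro (h | h) <;>
    obtain ⟨a, b, c, d, e, ha, hb, hc, hd, he, heq⟩ := five_dest h
  · rw [mem_la] at hb hd; subst hb; subst hd
    have hr : a ++ [true] ++ c ++ [true] <+: w := by
      rw [heq]; exact ⟨e, rfl⟩
    have hra : a <+: w := by
      rw [heq]
      exact ⟨[true] ++ c ++ [true] ++ e, by simp⟩
    have h1 := (hpre _ hra).1
    have h2 := (hpre _ hr).2
    have hmuc : mu c = (k:ℤ) := hc.1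
    simp only [mu_append, mu_true] at h2
    omega
  · rw [mem_lb] at hb hd; subst hb; subst hd
    have hr : a ++ [false] ++ c ++ [false] <+: w := by
      rw [heq]; exact ⟨e, rfl⟩
    have hra : a <+: w := by
      rw [heq]
      exact ⟨[false] ++ c ++ [false] ++ e, by simp⟩
    have h1 := (hpre _ hra).2
    have h2 := (hpre _ hr).1
    have hmuc : mu c = -(k:ℤ) := hc.1
    simp only [mu_append, mu_false] at h2
    omega

lemma bounded_of_not_rise {k : ℕ} {w : List Bool}
    (h : w ∉ (⊤ * la * Wp k * la * ⊤ : Language Bool)) :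
    ∀ r s : List Bool, r <+: s → s <+: w → mu s ≤ mu r + ((k:ℤ)+1) := by
  intro r s hrs hsw
  by_contra hcon
  push_neg at hcon
  apply h
  have hrw : r <+: w := hrs.trans hsw
  have hr : w.take r.length = r := (List.prefix_iff_eq_take.1 hrw).symm
  have hs : w.take s.length = s := (List.prefix_iff_eq_take.1 hsw).symm
  apply rise_mem k w r.length s.length hsw.length_le hrs.length_le
  rw [hr, hs]
  omega

lemma bounded_of_not_fall {k : ℕ} {w : List Bool}
    (h : w ∉ (⊤ * lb * Wm k * lb * ⊤ : Language Bool)) :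
    ∀ r s : List Bool, r <+: s → s <+: w → mu r ≤ mu s + ((k:ℤ)+1) := by
  intro r s hrs hsw
  by_contra hcon
  push_neg at hcon
  apply h
  have hrw : r <+: w := hrs.trans hsw
  have hr : w.take r.length = r := (List.prefix_iff_eq_take.1 hrw).symm
  have hs : w.take s.length = s := (List.prefix_iff_eq_take.1 hsw).symm
  apply fall_mem k w r.length s.length hsw.length_le hrs.length_le
  rw [hr, hs]
  omega

lemma prefix_cases {u rest r : List Bool} (hr : r <+: u ++ rest) :
    r <+: u ∨ ∃ s, s <+: rest ∧ r = u ++ s := by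
  rcases le_or_gt r.length u.length with h | h
  · left
    exact List.prefix_of_prefix_length_le hr (List.prefix_append u rest) h
  · right
    have hu : u <+: r := List.prefix_of_prefix_length_le (List.prefix_append u rest) hr (by omega)
    obtain ⟨s, rfl⟩ := hu
    exact ⟨s, (List.prefix_append_right_inj u).1 hr, rfl⟩

lemma prefix_single {c : Bool} {s : List Bool} (h : s <+: [c]) : s = [] ∨ s = [c] := by
  obtain ⟨t, ht⟩ := h
  cases s with
  | nil => left; rfl
  | cons a s' =>
    right
    cases s' with
    | nil =>
      have : c = a := by simpa using congrArg (fun l => List.take 1 l) ht.symm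
      rw [this]
    | cons b s'' => simp at ht

-- base cases
lemma Wp_zero : Wp 0 = 1 := by
  ext w
  rw [Language.mem_one]
  constructor
  · rintro ⟨h1, h2⟩
    cases w with
    | nil => rfl
    | cons c t =>
      have := h2 [c] ⟨t, rfl⟩
      cases c <;> simp at this <;> omega
  · rintro rfl
    refine ⟨by simp, fun r hr => ?_⟩
    rw [List.prefix_nil.1 hr]
    simp

lemma Wm_zero : Wm 0 = 1 := by
  ext w
  rw [Language.mem_one]
  constructor
  · rintro ⟨h1, h2⟩
    cases w with
    | nil => rfl
    | cons c t =>
      have := h2 [c] ⟨t, rfl⟩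
      cases c <;> simp at this <;> omega
  · rintro rfl
    refine ⟨by simp, fun r hr => ?_⟩
    rw [List.prefix_nil.1 hr]
    simp

lemma W_zero : W 0 = 1 := by
  ext w
  rw [Language.mem_one]
  constructor
  · rintro ⟨h1, h2, _⟩
    cases w with
    | nil => rfl
    | cons c t =>
      have := h2 [c] ⟨t, rfl⟩
      cases c <;> simp at this <;> omega
  · rintro rfl
    refine ⟨by simp, fun r hr => ?_, [], List.nil_prefix, by simp⟩
    rw [List.prefix_nil.1 hr]
    simp

-- composition lemmas (⊇ directions)
lemma compWp_case2 {k i : ℕ} (hik : i ≤ k) {u v : List Bool} (hu : u ∈ W i) (hv : v ∈ Wp k) :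
    u ++ [true] ++ v ∈ Wp (k+1) := by
  obtain ⟨hu0, hupre, _⟩ := hu
  obtain ⟨hv0, hvpre⟩ := hv
  constructor
  · rw [mu_append, mu_append, hu0, mu_true, hv0]
    push_cast
    ring
  · intro r hr
    rcases prefix_cases hr with h | ⟨s, hs, rfl⟩
    · rcases prefix_cases h with h' | ⟨s, hs, rfl⟩
      · have := hupre r h'
        have hik' : (i:ℤ) ≤ (k:ℤ) := by exact_mod_cast hik
        push_cast
        constructor <;> linarith [this.1, this.2]
      · rcases prefix_single hs with rfl | rfl
        · rw [List.append_nil, hu0]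
          omega
        · rw [mu_append, hu0, mu_true]
          omega
    · have := hvpre s hs
      rw [mu_append, mu_append, hu0, mu_true]
      push_cast
      constructor <;> linarith [this.1, this.2]

lemma compWp_case1 {k : ℕ} {u m v : List Bool} (hu : u ∈ Wp k) (hv : v ∈ Wp k)
    (hnr : (u ++ [true] ++ m ++ [true] ++ v) ∉ (⊤ * la * Wp k * la * ⊤ : Language Bool))
    (hnf : (u ++ [true] ++ m ++ [true] ++ v) ∉ (⊤ * lb * Wm k * lb * ⊤ : Language Bool)) :
    u ++ [true] ++ m ++ [true] ++ v ∈ Wp (k+1) := by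
  obtain ⟨hu0, hupre⟩ := hu
  obtain ⟨hv0, hvpre⟩ := hv
  set w := u ++ [true] ++ m ++ [true] ++ v with hw
  have hP : u ++ [true] <+: w := ⟨m ++ [true] ++ v, by simp [hw]⟩
  have hmuP : mu (u ++ [true]) = (k:ℤ) + 1 := by rw [mu_append, hu0, mu_true]
  have hbound : ∀ r, r <+: w → 0 ≤ mu r ∧ mu r ≤ (k:ℤ) + 1 := by
    intro r hr
    constructor
    · rcases le_or_gt r.length (u ++ [true]).length with h | h
      · have hru : r <+: u ++ [true] := List.prefix_of_prefix_length_le hr hP h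
        rcases prefix_cases hru with h' | ⟨s, hs, rfl⟩
        · exact (hupre r h').1
        · rcases prefix_single hs with rfl | rfl
          · rw [List.append_nil]; linarith [(hupre u (List.prefix_refl u)).1]
          · rw [mu_append, hu0, mu_true]; omega
      · have := bounded_of_not_fall hnf (u ++ [true]) r
          (List.prefix_of_prefix_length_le hP hr (by omega)) hr
        omega
    · have := bounded_of_not_rise hnr [] r (List.nil_prefix) hr
      simpa using this
  have hr1 : u ++ [true] ++ m <+: w := ⟨[true] ++ v, by simp [hw]⟩
  have h1 := hbound _ hr1
  have h2 := hbound w (List.prefix_refl w)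
  have hmuw : mu w = mu (u ++ [true] ++ m) + 1 + (k:ℤ) := by
    rw [hw, mu_append, mu_append, mu_true, hv0]
  refine ⟨by omega, fun r hr => hbound r hr⟩

lemma compW {k : ℕ} {u m v : List Bool} (hu : u ∈ Wp k) (hv : v ∈ Wm k)
    (hnr : (u ++ [true] ++ m ++ [false] ++ v) ∉ (⊤ * la * Wp k * la * ⊤ : Language Bool))
    (hnf : (u ++ [true] ++ m ++ [false] ++ v) ∉ (⊤ * lb * Wm k * lb * ⊤ : Language Bool)) :
    u ++ [true] ++ m ++ [false] ++ v ∈ W (k+1) := by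
  obtain ⟨hu0, hupre⟩ := hu
  obtain ⟨hv0, hvpre⟩ := hv
  set w := u ++ [true] ++ m ++ [false] ++ v with hw
  have hP : u ++ [true] <+: w := ⟨m ++ [false] ++ v, by simp [hw]⟩
  have hmuP : mu (u ++ [true]) = (k:ℤ) + 1 := by rw [mu_append, hu0, mu_true]
  have hbound : ∀ r, r <+: w → 0 ≤ mu r ∧ mu r ≤ (k:ℤ) + 1 := by
    intro r hr
    constructor
    · rcases le_or_gt r.length (u ++ [true]).length with h | h
      · have hru : r <+: u ++ [true] := List.prefix_of_prefix_length_le hr hP h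
        rcases prefix_cases hru with h' | ⟨s, hs, rfl⟩
        · exact (hupre r h').1
        · rcases prefix_single hs with rfl | rfl
          · rw [List.append_nil]; linarith [(hupre u (List.prefix_refl u)).1]
          · rw [mu_append, hu0, mu_true]; omega
      · have := bounded_of_not_fall hnf (u ++ [true]) r
          (List.prefix_of_prefix_length_le hP hr (by omega)) hr
        omega
    · have := bounded_of_not_rise hnr [] r (List.nil_prefix) hr
      simpa using this
  have hr1 : u ++ [true] ++ m <+: w := ⟨[false] ++ v, by simp [hw]⟩
  have h1 := hbound _ hr1
  have h2 := hbound w (List.prefix_refl w)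
  have hmuw : mu w = mu (u ++ [true] ++ m) - 1 - (k:ℤ) := by
    rw [hw, mu_append, mu_append, mu_false, hv0]
    ring
  refine ⟨by omega, fun r hr => ?_, u ++ [true], hP, by push_cast; omega⟩
  have := hbound r hr
  push_cast
  omega

/-- Two-point split of a word at positions `i < j < |w|`. -/
lemma split2 (w : List Bool) (i j : ℕ) (hij : i < j) (hj : j < w.length) :
    w = w.take i ++ w[i] :: ((w.take j).drop (i+1) ++ w[j] :: w.drop (j+1)) := by
  have e1 : w.take (i+1) = w.take i ++ [w[i]] := by
    rw [List.take_succ, List.getElem?_eq_getElem (by omega)]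
    rfl
  have e2 : w.take j = w.take (i+1) ++ (w.take j).drop (i+1) := by
    have h2 := List.take_append_drop (i+1) (w.take j)
    rw [List.take_take] at h2
    have hmin : min (i+1) j = i+1 := by omega
    rw [hmin] at h2
    exact h2.symm
  have e3 : w = w.take j ++ w[j] :: w.drop (j+1) := by
    conv_lhs => rw [← List.take_append_drop j w]
    congr 1
    exact (List.getElem_cons_drop hj).symm
  conv_lhs => rw [e3, e2, e1]
  simp only [List.append_assoc, List.cons_append, List.singleton_append, List.nil_append]

/-- One-point split. -/
lemma split1 (w : List Bool) (i : ℕ) (hi : i < w.length) :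
    w = w.take i ++ w[i] :: w.drop (i+1) := by
  conv_lhs => rw [← List.take_append_drop i w]
  congr 1
  exact (List.getElem_cons_drop hi).symm

lemma take_mu_all {w : List Bool} {n : ℕ} (h : w.length ≤ n) : mu (w.take n) = mu w := by
  rw [List.take_of_length_le h]

lemma letter_up {w : List Bool} {n : ℕ} (hn : n < w.length)
    (h : mu (w.take (n+1)) = mu (w.take n) + 1) : w[n] = true := by
  have := mu_take_succ w n hn
  by_contra hcon
  rw [Bool.not_eq_true] at hcon
  rw [hcon] at this
  simp at this
  omega

lemma letter_down {w : List Bool} {n : ℕ} (hn : n < w.length)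
    (h : mu (w.take (n+1)) = mu (w.take n) - 1) : w[n] = false := by
  have := mu_take_succ w n hn
  by_contra hcon
  rw [Bool.not_eq_false] at hcon
  rw [hcon] at this
  simp at this
  omega

/-- Decomposition of `W (k+1)`. -/
lemma decompW {k : ℕ} {w : List Bool} (h : w ∈ W (k+1)) :
    ∃ s m v, s ∈ Wp k ∧ v ∈ Wm k ∧ w = s ++ [true] ++ m ++ [false] ++ v := by
  rw [mem_W] at h
  obtain ⟨hmu, hpre, n0, hn0len, hn0⟩ := h
  classical
  have hex : ∃ n, mu (w.take n) = (k:ℤ)+1 := ⟨n0, by push_cast at hn0 ⊢; omega⟩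
  set q := Nat.find hex with hq
  have hfq : mu (w.take q) = (k:ℤ)+1 := Nat.find_spec hex
  have hqn0 : q ≤ n0 := Nat.find_le (by push_cast at hn0 ⊢; omega)
  have hqlen : q ≤ w.length := le_trans hqn0 hn0len
  have hq1 : 1 ≤ q := by
    rcases Nat.eq_zero_or_pos q with h0 | h0
    · rw [h0] at hfq; simp at hfq; omega
    · exact h0
  have hlt : ∀ t, t < q → mu (w.take t) ≤ (k:ℤ) := by
    intro t ht
    have h1 := (hpre t).2
    have h2 : mu (w.take t) ≠ (k:ℤ)+1 := Nat.find_min hex ht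
    push_cast at h1
    omega
  -- last hit
  set t := Nat.findGreatest (fun n => mu (w.take n) = (k:ℤ)+1) w.length with ht
  have hft : mu (w.take t) = (k:ℤ)+1 :=
    Nat.findGreatest_spec (P := fun n => mu (w.take n) = (k:ℤ)+1) hqlen hfq
  have hqt : q ≤ t := Nat.le_findGreatest hqlen hfq
  have htlen : t < w.length := by
    rcases Nat.lt_or_ge t w.length with h0 | h0
    · exact h0
    · exfalso
      rw [take_mu_all h0, hmu] at hft
      omega
  have htmax : ∀ n, t < n → mu (w.take n) ≤ (k:ℤ) := by
    intro n hn
    rcases le_or_gt n w.length with h0 | h0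
    · have h1 := (hpre n).2
      have h2 : mu (w.take n) ≠ (k:ℤ)+1 :=
        Nat.findGreatest_is_greatest (P := fun n => mu (w.take n) = (k:ℤ)+1) hn h0
      push_cast at h1
      omega
    · rw [take_mu_all (by omega), hmu]
      omega
  -- letters
  have hq1' : q - 1 + 1 = q := by omega
  have hlq : w[q-1] = true := by
    apply letter_up (by omega)
    rw [hq1']
    have := hlt (q-1) (by omega)
    have hs := mu_take_step w (q-1) (by omega)
    rw [hq1'] at hs
    omega
  have hmuq1 : mu (w.take (q-1)) = (k:ℤ) := by
    have := hlt (q-1) (by omega)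
    have hs := mu_take_step w (q-1) (by omega)
    rw [hq1'] at hs
    omega
  have hlt' : w[t] = false := by
    apply letter_down htlen
    have h1 := htmax (t+1) (by omega)
    have hs := mu_take_step w t htlen
    omega
  have hmut1 : mu (w.take (t+1)) = (k:ℤ) := by
    have h1 := htmax (t+1) (by omega)
    have hs := mu_take_step w t htlen
    have h2 := (hpre (t+1)).1
    omega
  -- pieces
  have hsWp : w.take (q-1) ∈ Wp k := by
    rw [mem_Wp]
    refine ⟨hmuq1, fun n => ?_⟩
    rw [List.take_take]
    rcases le_or_gt n (q-1) with h0 | h0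
    · have hmin : min n (q-1) = n := by omega
      rw [hmin]
      exact ⟨(hpre n).1, hlt n (by omega)⟩
    · have hmin : min n (q-1) = q - 1 := by omega
      rw [hmin, hmuq1]
      exact ⟨by positivity, le_refl _⟩
  have hvWm : w.drop (t+1) ∈ Wm k := by
    rw [mem_Wm]
    constructor
    · rw [mu_drop, hmu, hmut1]
      ring
    · intro n
      rw [List.take_drop, mu_drop]
      have h1 : (w.take (t+1+n)).take (t+1) = w.take (t+1) := by
        rw [List.take_take]
        congr 1
        omega
      rw [h1, hmut1]
      have h2 := (hpre (t+1+n)).1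
      rcases Nat.eq_or_lt_of_le (Nat.le_add_right (t+1) n) with h3 | h3
      · rw [← h3, hmut1]
        constructor <;> omega
      · have := htmax (t+1+n) (by omega)
        constructor <;> omega
  refine ⟨w.take (q-1), (w.take t).drop q, w.drop (t+1), hsWp, hvWm, ?_⟩
  have hs2 := split2 w (q-1) t (by omega) htlen
  rw [hlq, hlt', hq1'] at hs2
  conv_lhs => rw [hs2]
  simp only [List.append_assoc, List.cons_append, List.singleton_append, List.nil_append]

/-- Decomposition of `Wp (k+1)`. -/
lemma decompWp {k : ℕ} {w : List Bool} (h : w ∈ Wp (k+1)) :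
    (∃ s m v, s ∈ Wp k ∧ v ∈ Wp k ∧ w = s ++ [true] ++ m ++ [true] ++ v) ∨
    (∃ i, i ≤ k ∧ ∃ u v, u ∈ W i ∧ v ∈ Wp k ∧ w = u ++ [true] ++ v) := by
  rw [mem_Wp] at h
  obtain ⟨hmu, hpre⟩ := h
  classical
  have hex : ∃ n, mu (w.take n) = (k:ℤ)+1 := by
    refine ⟨w.length, ?_⟩
    rw [List.take_length]
    push_cast at hmu
    omega
  set q := Nat.find hex with hq
  have hfq : mu (w.take q) = (k:ℤ)+1 := Nat.find_spec hex
  have hqlen : q ≤ w.length := Nat.find_le (by rw [List.take_length]; push_cast at hmu; omega)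
  have hq1 : 1 ≤ q := by
    rcases Nat.eq_zero_or_pos q with h0 | h0
    · rw [h0] at hfq; simp at hfq; omega
    · exact h0
  have hlt : ∀ t, t < q → mu (w.take t) ≤ (k:ℤ) := by
    intro t ht
    have h1 := (hpre t).2
    have h2 : mu (w.take t) ≠ (k:ℤ)+1 := Nat.find_min hex ht
    push_cast at h1
    omega
  -- last zero
  set p := Nat.findGreatest (fun n => mu (w.take n) = 0) w.length with hp
  have hfp : mu (w.take p) = 0 :=
    Nat.findGreatest_spec (P := fun n => mu (w.take n) = 0) (Nat.zero_le _) (by simp)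
  have hple : p ≤ w.length := Nat.findGreatest_le w.length
  have hplen : p < w.length := by
    rcases Nat.lt_or_ge p w.length with h0 | h0
    · exact h0
    · exfalso
      have : p = w.length := by omega
      rw [this, List.take_length, hmu] at hfp
      push_cast at hfp
      omega
  have hpmax : ∀ n, p < n → 1 ≤ mu (w.take n) := by
    intro n hn
    rcases le_or_gt n w.length with h0 | h0
    · have h1 := (hpre n).1
      have h2 : mu (w.take n) ≠ 0 :=
        Nat.findGreatest_is_greatest (P := fun n => mu (w.take n) = 0) hn h0
      omega
    · rw [take_mu_all (by omega), hmu]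
      push_cast
      omega
  have hstep_p := mu_take_step w p hplen
  have hfp1 : mu (w.take (p+1)) = 1 := by
    have := hpmax (p+1) (by omega)
    omega
  have hlp : w[p] = true := letter_up hplen (by omega)
  have hvWp : w.drop (p+1) ∈ Wp k := by
    rw [mem_Wp]
    constructor
    · rw [mu_drop, hmu, hfp1]
      push_cast
      ring
    · intro n
      rw [List.take_drop, mu_drop]
      have h1 : (w.take (p+1+n)).take (p+1) = w.take (p+1) := by
        rw [List.take_take]
        congr 1
        omega
      rw [h1, hfp1]
      have h2 := hpmax (p+1+n) (by omega)
      have h3 : mu (w.take (p+1+n)) ≤ (k:ℤ)+1 := by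
        rcases le_or_gt (p+1+n) w.length with h0 | h0
        · have := (hpre (p+1+n)).2; push_cast at this; omega
        · rw [take_mu_all (by omega)]; push_cast at hmu; omega
      constructor <;> omega
  rcases le_or_gt q p with hqp | hpq
  · -- case 1 : has a k+1 hit before the last zero
    left
    have hq1' : q - 1 + 1 = q := by omega
    have hlq : w[q-1] = true := by
      apply letter_up (by omega)
      rw [hq1']
      have := hlt (q-1) (by omega)
      have hs := mu_take_step w (q-1) (by omega)
      rw [hq1'] at hs
      omega
    have hmuq1 : mu (w.take (q-1)) = (k:ℤ) := by
      have := hlt (q-1) (by omega)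
      have hs := mu_take_step w (q-1) (by omega)
      rw [hq1'] at hs
      omega
    have hsWp : w.take (q-1) ∈ Wp k := by
      rw [mem_Wp]
      refine ⟨hmuq1, fun n => ?_⟩
      rw [List.take_take]
      rcases le_or_gt n (q-1) with h0 | h0
      · have hmin : min n (q-1) = n := by omega
        rw [hmin]
        exact ⟨(hpre n).1, hlt n (by omega)⟩
      · have hmin : min n (q-1) = q - 1 := by omega
        rw [hmin, hmuq1]
        exact ⟨by positivity, le_refl _⟩
    refine ⟨w.take (q-1), (w.take p).drop q, w.drop (p+1), hsWp, hvWp, ?_⟩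
    have hs2 := split2 w (q-1) p (by omega) hplen
    rw [hlq, hlp, hq1'] at hs2
    conv_lhs => rw [hs2]
    simp only [List.append_assoc, List.cons_append, List.singleton_append, List.nil_append]
  · -- case 2 : the walk before the last zero stays ≤ k
    right
    set i := (Finset.range (p+1)).sup (fun n => (mu (w.take n)).toNat) with hi
    have hile : ∀ n, n ≤ p → mu (w.take n) ≤ (i:ℤ) := by
      intro n hn
      have h1 : (mu (w.take n)).toNat ≤ i :=
        Finset.le_sup (f := fun n => (mu (w.take n)).toNat) (Finset.mem_range.2 (by omega))
      have h2 := (hpre n).1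
      omega
    obtain ⟨n0, hn0mem, hn0⟩ :=
      Finset.exists_mem_eq_sup (Finset.range (p+1)) ⟨0, Finset.mem_range.2 (by omega)⟩
        (fun n => (mu (w.take n)).toNat)
    rw [Finset.mem_range] at hn0mem
    have hn0p : n0 ≤ p := by omega
    have hin0 : (i:ℤ) = mu (w.take n0) := by
      have h2 := (hpre n0).1
      rw [hi, hn0]
      omega
    have hik : i ≤ k := by
      have := hlt n0 (by omega)
      omega
    have huW : w.take p ∈ W i := by
      rw [mem_W]
      refine ⟨hfp, fun n => ?_, n0, ?_, ?_⟩
      · rw [List.take_take]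
        exact ⟨(hpre (min n p)).1, hile _ (by omega)⟩
      · rw [List.length_take]
        omega
      · rw [List.take_take]
        have hmin : min n0 p = n0 := by omega
        rw [hmin]
        omega
    refine ⟨i, hik, w.take p, w.drop (p+1), huW, hvWp, ?_⟩
    have hs1 := split1 w p hplen
    rw [hlp] at hs1
    conv_lhs => rw [hs1]
    simp only [List.append_assoc, List.cons_append, List.singleton_append, List.nil_append]

lemma three_dest {A B C : Language Bool} {w : List Bool} (h : w ∈ A * B * C) :
    ∃ a b c, a ∈ A ∧ b ∈ B ∧ c ∈ C ∧ w = a ++ b ++ c := by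
  obtain ⟨x2, h2, c, hc, rfl⟩ := Language.mem_mul.1 h
  obtain ⟨a, ha, b, hb, rfl⟩ := Language.mem_mul.1 h2
  exact ⟨a, b, c, ha, hb, hc, rfl⟩


mutual
  /-- The recursive definition `W′_k` of the witness languages. -/
  noncomputable def W' : ℕ → Language Bool
    | 0 => 1
    | k + 1 =>
        (W'p k * la * ⊤ * lb * W'm k) \
          (⊤ * la * W'p k * la * ⊤ ⊔ ⊤ * lb * W'm k * lb * ⊤)
    termination_by k => (k, 0)
  /-- The recursive definition `W′_k⁺`. -/
  noncomputable def W'p : ℕ → Language Bool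
    | 0 => 1
    | k + 1 =>
        ((W'p k * la * ⊤ * la * W'p k) ⊔ ⨆ i : Fin (k + 1), W' i.1 * la * W'p k) \
          (⊤ * la * W'p k * la * ⊤ ⊔ ⊤ * lb * W'm k * lb * ⊤)
    termination_by k => (k, 0)
  /-- The recursive definition `W′_k⁻`: the letter swap of `W′_k⁺`. -/
  noncomputable def W'm : ℕ → Language Bool
    | 0 => 1
    | k + 1 => swapL (W'p (k + 1))
    termination_by k => (k, 1)
end

/-- The prefix-counting and the recursive definitions of the witness languages agree:
`W_k = W′_k`, `W_k⁺ = W′_k⁺` and `W_k⁻ = W′_k⁻` for every `k`. -/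
theorem witness_languages_recursive_characterisation (k : ℕ) :
    W k = W' k ∧ Wp k = W'p k ∧ Wm k = W'm k := by
  induction k using Nat.strong_induction_on with
  | _ k ih =>
    cases k with
    | zero =>
      refine ⟨?_, ?_, ?_⟩
      · rw [W_zero, W']
      · rw [Wp_zero, W'p]
      · rw [Wm_zero, W'm]
    | succ k =>
      have ihp : Wp k = W'p k := (ih k (by omega)).2.1
      have ihm : Wm k = W'm k := (ih k (by omega)).2.2
      have ihw : ∀ i : ℕ, i ≤ k → W i = W' i := fun i hi => (ih i (by omega)).1
      -- the forbidden set
      have hFnot : ∀ w : List Bool, (∀ w', w' <+: w → 0 ≤ mu w' ∧ mu w' ≤ ((k+1:ℕ):ℤ)) →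
          w ∉ (⊤ * la * W'p k * la * ⊤ ⊔ ⊤ * lb * W'm k * lb * ⊤ : Language Bool) := by
        intro w hw
        rw [← ihp, ← ihm]
        apply notF k w
        intro w' h
        have := hw w' h
        push_cast at this
        exact ⟨this.1, this.2⟩
      have hWp : Wp (k+1) = W'p (k+1) := by
        rw [W'p]
        ext w
        constructor
        · intro hw
          refine ⟨?_, hFnot w hw.2⟩
          rcases decompWp hw with ⟨s, m, v, hs, hv, rfl⟩ | ⟨i, hik, u, v, hu, hv, rfl⟩
          · left
            exact mem_five (ihp ▸ hs) rfl trivial rfl (ihp ▸ hv)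
          · right
            apply Language.mem_iSup.2
            refine ⟨⟨i, by omega⟩, ?_⟩
            exact Language.mem_mul.2 ⟨u ++ [true],
              Language.mem_mul.2 ⟨u, (ihw i hik) ▸ hu, [true], rfl, rfl⟩, v, ihp ▸ hv, rfl⟩
        · rintro ⟨hpos, hnF⟩
          have hnr : w ∉ (⊤ * la * Wp k * la * ⊤ : Language Bool) := by
            rw [ihp]; exact fun hmem => hnF (Or.inl hmem)
          have hnf : w ∉ (⊤ * lb * Wm k * lb * ⊤ : Language Bool) := by
            rw [ihm]; exact fun hmem => hnF (Or.inr hmem)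
          rcases hpos with h5 | hsup
          · obtain ⟨s, b, m, d, v, hs, hb, hd', hv', hv, rfl⟩ := five_dest h5
            rw [mem_la] at hb hv'
            subst hb; subst hv'
            exact compWp_case1 (ihp ▸ hs) (ihp ▸ hv) hnr hnf
          · have hsup := Language.mem_iSup.1 hsup
            obtain ⟨i, hi⟩ := hsup
            obtain ⟨u, b, v, hu, hb, hv, rfl⟩ := three_dest hi
            rw [mem_la] at hb
            subst hb
            have hik : (i : ℕ) ≤ k := by omega
            exact compWp_case2 hik ((ihw i hik) ▸ hu) (ihp ▸ hv)
      have hW : W (k+1) = W' (k+1) := by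
        rw [W']
        ext w
        constructor
        · intro hw
          refine ⟨?_, hFnot w hw.2.1⟩
          obtain ⟨s, m, v, hs, hv, rfl⟩ := decompW hw
          exact mem_five (ihp ▸ hs) rfl trivial rfl (ihm ▸ hv)
        · rintro ⟨h5, hnF⟩
          have hnr : w ∉ (⊤ * la * Wp k * la * ⊤ : Language Bool) := by
            rw [ihp]; exact fun hmem => hnF (Or.inl hmem)
          have hnf : w ∉ (⊤ * lb * Wm k * lb * ⊤ : Language Bool) := by
            rw [ihm]; exact fun hmem => hnF (Or.inr hmem)
          obtain ⟨s, b, m, d, v, hs, hb, hd', hv', hv, rfl⟩ := five_dest h5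
          rw [mem_la] at hb
          rw [mem_lb] at hv'
          subst hb; subst hv'
          exact compW (ihp ▸ hs) (ihm ▸ hv) hnr hnf
      refine ⟨hW, hWp, ?_⟩
      rw [W'm, ← hWp, ← Wm_eq_swap]

end ADTpaper
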